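/- Let f ∈ H(𝔻) be 𝒰-frequently hypercyclic for T_α. Then: if α ≤ 0, limsup_{r→1⁻} (1−r)^{−α} · M_1(f,r) = +∞; and if α > 0, limsup_{r→1⁻} M_1(f,r) > 0. -/

import Mathlib

open Filter Set MeasureTheory
open scoped Topology ENNReal Real Classical

noncomputable section

/-- The weighted Taylor shift `T_α` acting on Taylor-coefficient sequences:
`(T_α a) k = a (k+1) * (1 + 1/(k+1))^α`. -/
def Tshift (α : ℝ) (a : ℕ → ℂ) : ℕ → ℂ :=
  fun k => a (k + 1) * (((1 + 1 / ((k : ℝ) + 1)) ^ α : ℝ) : ℂ)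

/-- The holomorphic function on the unit disc determined by a coefficient sequence. -/
def sumFn (a : ℕ → ℂ) : ℂ → ℂ := fun z => ∑' k : ℕ, a k * z ^ k

/-- `a` is the Taylor-coefficient sequence of a function in `H(𝔻)`
(the power series converges on every disc of radius `r < 1`). -/
def InHD (a : ℕ → ℂ) : Prop :=
  ∀ r : ℝ, 0 ≤ r → r < 1 → Summable (fun k : ℕ => ‖a k‖ * r ^ k)

/-- The integral mean `M_p(f, r)`, `1 ≤ p ≤ ∞`, of the function with coefficient
sequence `a`. -/
def Mp (p : ℝ≥0∞) (a : ℕ → ℂ) (r : ℝ) : ℝ :=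
  if p = ∞ then
    sSup ((fun t : ℝ => ‖sumFn a (r * Complex.exp (Complex.I * t))‖) '' Set.Icc 0 (2 * π))
  else
    (1 / (2 * π) * ∫ t in (0:ℝ)..(2 * π),
      ‖sumFn a (r * Complex.exp (Complex.I * t))‖ ^ p.toReal) ^ (1 / p.toReal)

/-- Upper weighted density of `A ⊆ ℕ` associated with a weight sequence `β`. -/
def upperDensityWt (β : ℕ → ℝ) (A : Set ℕ) : ℝ :=
  Filter.limsup (fun n : ℕ =>
    (∑ k ∈ Finset.Icc 1 n, A.indicator (fun j => β j) k) / ∑ k ∈ Finset.Icc 1 n, β k)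
    Filter.atTop

/-- The weight sequence `β^γ = (e^{n^γ})`. -/
def betaGamma (γ : ℝ) : ℕ → ℝ := fun n => Real.exp ((n : ℝ) ^ γ)

/-- `a` is hypercyclic for `T_α`: its orbit is dense in `H(𝔻)` for the topology of
uniform convergence on compact subsets of the unit disc. -/
def Hypercyclic (α : ℝ) (a : ℕ → ℂ) : Prop :=
  ∀ b : ℕ → ℂ, InHD b → ∀ K : Set ℂ, IsCompact K → K ⊆ Metric.ball (0 : ℂ) 1 →
    ∀ ε : ℝ, 0 < ε → ∃ n : ℕ, ∀ z ∈ K, ‖sumFn ((Tshift α)^[n] a) z - sumFn b z‖ < ε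

/-- `a` is `𝒰_β`-frequently hypercyclic for `T_α`: for every nonempty basic open set of
`H(𝔻)`, the set of return times has positive upper `β`-density. -/
def UFHCwt (β : ℕ → ℝ) (α : ℝ) (a : ℕ → ℂ) : Prop :=
  ∀ b : ℕ → ℂ, InHD b → ∀ K : Set ℂ, IsCompact K → K ⊆ Metric.ball (0 : ℂ) 1 →
    ∀ ε : ℝ, 0 < ε →
      0 < upperDensityWt β
        {n : ℕ | ∀ z ∈ K, ‖sumFn ((Tshift α)^[n] a) z - sumFn b z‖ < ε}

/-- `a` is `𝒰`-frequently hypercyclic for `T_α` (natural upper density of return times). -/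
def UFreqHC (α : ℝ) (a : ℕ → ℂ) : Prop := UFHCwt (fun _ => 1) α a

/-- The conjugate exponent `q` of `p` (`q = 1` when `p = ∞`). -/
def qConj (p : ℝ≥0∞) : ℝ := if p = ∞ then 1 else p.toReal / (p.toReal - 1)

/-- The quantity `1 / max(2, q)`, interpreted as `0` when `p = 1`. -/
def critFactor (p : ℝ≥0∞) : ℝ := if p = 1 then 0 else 1 / max 2 (qConj p)

/-- `limsup_{r → 1⁻}` of a real-valued function of `r ∈ (0,1)`, computed in `EReal`. -/
def limsupR (g : ℝ → ℝ) : EReal :=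
  Filter.limsup (fun r : ℝ => (g r : EReal)) (nhdsWithin 1 (Set.Ioo 0 1))

end
section Aux

open Complex in
lemma tshift_iterate (α : ℝ) (a : ℕ → ℂ) :
    ∀ n k, ((Tshift α)^[n] a) k
      = a (k + n) * (((((k : ℝ) + n + 1) / ((k : ℝ) + 1)) ^ α : ℝ) : ℂ) := by
  intro n
  induction n generalizing a with
  | zero =>
      intro k
      have : ((k : ℝ) + 1) / ((k : ℝ) + 1) = 1 := div_self (by positivity)
      simp [this]
  | succ m ih =>
      intro k
      rw [Function.iterate_succ_apply, ih (Tshift α a) k]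
      simp only [Tshift]
      have h1 : (0:ℝ) < (k : ℝ) + (m : ℝ) + 1 := by positivity
      have h2 : (0:ℝ) < (k : ℝ) + 1 := by positivity
      have hb : (1 + 1 / (((k + m : ℕ) : ℝ) + 1)) = ((k : ℝ) + m + 2) / ((k : ℝ) + m + 1) := by
        push_cast
        field_simp
        ring
      rw [hb, mul_assoc, ← Complex.ofReal_mul, ← Real.mul_rpow (by positivity) (by positivity)]
      have hbase : ((k : ℝ) + m + 2) / ((k : ℝ) + m + 1) * (((k : ℝ) + m + 1) / ((k : ℝ) + 1))
          = ((k : ℝ) + ((m : ℝ) + 1) + 1) / ((k : ℝ) + 1) := by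
        field_simp
        ring
      rw [hbase]
      have hidx : k + m + 1 = k + (m + 1) := by omega
      rw [hidx]
      push_cast
      ring

lemma sumFn_zero (c : ℕ → ℂ) : sumFn c 0 = c 0 := by
  unfold sumFn
  rw [tsum_eq_single 0 (fun b hb => by simp [zero_pow hb])]
  simp

lemma tshift_iterate_zero (α : ℝ) (a : ℕ → ℂ) (n : ℕ) :
    ((Tshift α)^[n] a) 0 = a n * ((((n : ℝ) + 1) ^ α : ℝ) : ℂ) := by
  have := tshift_iterate α a n 0
  simpa using this

lemma infinite_of_pos_upperDensity {A : Set ℕ}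
    (h : 0 < upperDensityWt (fun _ => 1) A) : A.Infinite := by
  by_contra hfin
  rw [Set.not_infinite] at hfin
  have hzero : upperDensityWt (fun _ => 1) A = 0 := by
    unfold upperDensityWt
    have hval : ∀ n : ℕ,
        (∑ k ∈ Finset.Icc 1 n, A.indicator (fun _ => (1:ℝ)) k) / ∑ k ∈ Finset.Icc 1 n, (1:ℝ)
          ≤ (hfin.toFinset.card : ℝ) / n := by
      intro n
      have hden : (∑ k ∈ Finset.Icc 1 n, (1:ℝ)) = (n : ℝ) := by
        simp [Nat.card_Icc]
      have hnum : (∑ k ∈ Finset.Icc 1 n, A.indicator (fun _ => (1:ℝ)) k)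
          ≤ (hfin.toFinset.card : ℝ) := by
        calc (∑ k ∈ Finset.Icc 1 n, A.indicator (fun _ => (1:ℝ)) k)
            = ∑ k ∈ (Finset.Icc 1 n).filter (· ∈ A), (1:ℝ) := by
              rw [Finset.sum_filter]
              refine Finset.sum_congr rfl fun k _ => ?_
              by_cases hk : k ∈ A <;> simp [Set.indicator_apply, hk]
          _ = (((Finset.Icc 1 n).filter (· ∈ A)).card : ℝ) := by simp
          _ ≤ (hfin.toFinset.card : ℝ) := by
              have : (Finset.Icc 1 n).filter (· ∈ A) ⊆ hfin.toFinset := by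
                intro k hk
                simp only [Finset.mem_filter] at hk
                exact hfin.mem_toFinset.2 hk.2
              exact_mod_cast Finset.card_le_card this
      rw [hden]
      exact div_le_div_of_nonneg_right hnum (Nat.cast_nonneg n)
    have hnn : ∀ n : ℕ,
        0 ≤ (∑ k ∈ Finset.Icc 1 n, A.indicator (fun _ => (1:ℝ)) k) / ∑ k ∈ Finset.Icc 1 n, (1:ℝ) := by
      intro n
      refine div_nonneg (Finset.sum_nonneg fun k _ => ?_) (Finset.sum_nonneg fun k _ => by norm_num)
      exact Set.indicator_nonneg (fun _ _ => zero_le_one) k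
    exact Filter.Tendsto.limsup_eq
      (squeeze_zero hnn hval (tendsto_const_div_atTop_nhds_zero_nat _))
  rw [hzero] at h
  exact lt_irrefl 0 h

end Aux
section Coeff
open Complex MeasureTheory intervalIntegral

lemma norm_circle (r : ℝ) (hr : 0 ≤ r) (t : ℝ) :
    ‖(r : ℂ) * Complex.exp (Complex.I * t)‖ = r := by
  rw [norm_mul, Complex.norm_real, Complex.norm_exp]
  simp [_root_.abs_of_nonneg hr]

lemma coeff_le_M1 (a : ℕ → ℂ) (ha : InHD a) {r : ℝ} (hr0 : 0 < r) (hr1 : r < 1) (n : ℕ) :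
    ‖a n‖ * r ^ n ≤ Mp 1 a r := by
  have hπ : (0:ℝ) < π := Real.pi_pos
  have h2π : (0:ℝ) ≤ 2 * π := by positivity
  set f : ℕ → ℝ → ℂ := fun k t =>
    a k * ((r : ℂ) * Complex.exp (Complex.I * t)) ^ k * Complex.exp (-(Complex.I * n * t)) with hf
  have hnormexp : ∀ t : ℝ, ‖Complex.exp (-(Complex.I * n * t))‖ = 1 := by
    intro t
    rw [Complex.norm_exp]
    simp
  have hfnorm : ∀ k t, ‖f k t‖ = ‖a k‖ * r ^ k := by
    intro k t
    rw [hf]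
    simp only [norm_mul, norm_pow, norm_circle r hr0.le, hnormexp, mul_one]
  have hsum := ha r hr0.le hr1
  have hfc : ∀ k, Continuous (f k) := by
    intro k
    rw [hf]
    fun_prop
  have hGc : Continuous (fun t : ℝ => ∑' k, f k t) :=
    continuous_tsum hfc hsum (fun k t => le_of_eq (hfnorm k t))
  -- value of each term's integral
  have hInt : ∀ k, (∫ t in (0:ℝ)..(2 * π), f k t)
      = if k = n then ((2 * π : ℝ) : ℂ) * (a n * (r : ℂ) ^ n) else 0 := by
    intro k
    have hrw : ∀ t : ℝ, f k t
        = (a k * (r : ℂ) ^ k) * Complex.exp ((Complex.I * ((k : ℤ) - (n : ℤ)) : ℂ) * t) := by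
      intro t
      have e1 : Complex.exp ((Complex.I * ((k : ℤ) - (n : ℤ)) : ℂ) * t)
          = Complex.exp ((k : ℂ) * (Complex.I * t)) * Complex.exp (-(Complex.I * n * t)) := by
        rw [← Complex.exp_add]
        congr 1
        push_cast
        ring
      rw [hf]
      simp only
      rw [mul_pow, ← Complex.exp_nat_mul, e1]
      ring
    simp only [hrw]
    rw [intervalIntegral.integral_const_mul]
    by_cases hk : k = n
    · subst hk
      rw [if_pos rfl]
      have hz : Complex.I * (((k : ℤ) : ℂ) - ((k : ℤ) : ℂ)) = 0 := by
        rw [sub_self, mul_zero]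
      rw [hz]
      simp only [zero_mul, Complex.exp_zero]
      rw [intervalIntegral.integral_const, sub_zero, Complex.real_smul]
      push_cast
      ring
    · have hm : ((k : ℤ) - (n : ℤ)) ≠ 0 := sub_ne_zero.2 (by exact_mod_cast hk)
      have hc : (Complex.I * ((k : ℤ) - (n : ℤ)) : ℂ) ≠ 0 := by
        apply mul_ne_zero Complex.I_ne_zero
        exact_mod_cast hm
      rw [integral_exp_mul_complex hc]
      have h1 : Complex.exp ((Complex.I * ((k : ℤ) - (n : ℤ)) : ℂ) * ((2 * π : ℝ) : ℂ)) = 1 := by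
        have := Complex.exp_int_mul_two_pi_mul_I ((k : ℤ) - (n : ℤ))
        rw [← this]
        congr 1
        push_cast
        ring
      have h0 : Complex.exp ((Complex.I * ((k : ℤ) - (n : ℤ)) : ℂ) * ((0 : ℝ) : ℂ)) = 1 := by
        simp
      rw [h1, h0, sub_self, zero_div, mul_zero, if_neg hk]
  -- interchange sum and integral
  have hmeas : ∀ k, AEStronglyMeasurable (f k)
      (volume.restrict (Set.Ioc (0:ℝ) (2 * π))) := fun k => (hfc k).aestronglyMeasurable
  have hne : (∑' k, ∫⁻ t in Set.Ioc (0:ℝ) (2 * π), ‖f k t‖₊) ≠ ⊤ := by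
    have hb : ∀ k, (∫⁻ t in Set.Ioc (0:ℝ) (2 * π), ‖f k t‖₊)
        ≤ ENNReal.ofReal (‖a k‖ * r ^ k) * ENNReal.ofReal (2 * π) := by
      intro k
      calc (∫⁻ t in Set.Ioc (0:ℝ) (2 * π), ‖f k t‖₊)
          ≤ ∫⁻ _ in Set.Ioc (0:ℝ) (2 * π), ENNReal.ofReal (‖a k‖ * r ^ k) := by
            refine lintegral_mono fun t => ?_
            rw [← hfnorm k t, ofReal_norm, enorm_eq_nnnorm]
        _ = ENNReal.ofReal (‖a k‖ * r ^ k) * volume (Set.Ioc (0:ℝ) (2 * π)) := by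
            rw [MeasureTheory.setLIntegral_const]
        _ = ENNReal.ofReal (‖a k‖ * r ^ k) * ENNReal.ofReal (2 * π) := by
            rw [Real.volume_Ioc, sub_zero]
    refine ne_top_of_le_ne_top ?_ (ENNReal.tsum_le_tsum hb)
    rw [ENNReal.tsum_mul_right,
      ← ENNReal.ofReal_tsum_of_nonneg (fun k => by positivity) hsum]
    exact ENNReal.mul_ne_top ENNReal.ofReal_ne_top ENNReal.ofReal_ne_top
  have key : (∫ t in (0:ℝ)..(2 * π), ∑' k, f k t) = ((2 * π : ℝ) : ℂ) * (a n * (r : ℂ) ^ n) := by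
    rw [intervalIntegral.integral_of_le h2π, MeasureTheory.integral_tsum hmeas hne]
    have : ∀ k, (∫ t in Set.Ioc (0:ℝ) (2 * π), f k t)
        = if k = n then ((2 * π : ℝ) : ℂ) * (a n * (r : ℂ) ^ n) else 0 := by
      intro k
      rw [← intervalIntegral.integral_of_le h2π]
      exact hInt k
    simp_rw [this]
    rw [tsum_eq_single n (fun b hb => by rw [if_neg hb])]
    rw [if_pos rfl]
  -- norm estimate
  have heq : ∀ t : ℝ, (∑' k, f k t)
      = sumFn a ((r : ℂ) * Complex.exp (Complex.I * t)) * Complex.exp (-(Complex.I * n * t)) := by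
    intro t
    rw [sumFn, ← tsum_mul_right]
  have hnorm_int : ‖∫ t in (0:ℝ)..(2 * π), ∑' k, f k t‖
      ≤ ∫ t in (0:ℝ)..(2 * π), ‖sumFn a ((r : ℂ) * Complex.exp (Complex.I * t))‖ := by
    refine (intervalIntegral.norm_integral_le_integral_norm h2π).trans_eq ?_
    refine intervalIntegral.integral_congr fun t _ => ?_
    rw [heq t, norm_mul, hnormexp, mul_one]
  have hkeynorm : ‖((2 * π : ℝ) : ℂ) * (a n * (r : ℂ) ^ n)‖ = (2 * π) * (‖a n‖ * r ^ n) := by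
    rw [norm_mul, norm_mul, norm_pow, Complex.norm_real, Complex.norm_real]
    rw [Real.norm_eq_abs, Real.norm_eq_abs, _root_.abs_of_nonneg h2π, _root_.abs_of_nonneg hr0.le]
  have hmain : (2 * π) * (‖a n‖ * r ^ n)
      ≤ ∫ t in (0:ℝ)..(2 * π), ‖sumFn a ((r : ℂ) * Complex.exp (Complex.I * t))‖ := by
    rw [← hkeynorm, ← key]
    exact hnorm_int
  have hMp : Mp 1 a r
      = 1 / (2 * π) * ∫ t in (0:ℝ)..(2 * π), ‖sumFn a ((r : ℂ) * Complex.exp (Complex.I * t))‖ := by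
    rw [Mp, if_neg (by simp : (1 : ℝ≥0∞) ≠ ∞)]
    simp [Real.rpow_one]
  rw [hMp]
  calc ‖a n‖ * r ^ n = 1 / (2 * π) * ((2 * π) * (‖a n‖ * r ^ n)) := by field_simp
    _ ≤ _ := mul_le_mul_of_nonneg_left hmain (by positivity)

end Coeff
section Main
open Complex

lemma exists_large_coeff (α : ℝ) (a : ℕ → ℂ) (hfa : UFreqHC α a) (C : ℝ) (N : ℕ) :
    ∃ n : ℕ, N < n ∧ C - 1 ≤ ‖a n‖ * ((n : ℝ) + 1) ^ α := by
  classical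
  set b : ℕ → ℂ := fun k => if k = 0 then (C : ℂ) else 0 with hbdef
  have hb : InHD b := by
    intro r _ _
    apply summable_of_ne_finset_zero (s := ({0} : Finset ℕ))
    intro k hk
    have : k ≠ 0 := by simpa using hk
    simp [hbdef, this]
  have hsub : ({0} : Set ℂ) ⊆ Metric.ball (0 : ℂ) 1 := by
    intro z hz
    simp only [Set.mem_singleton_iff] at hz
    simp [hz]
  have hpos := hfa b hb {0} isCompact_singleton hsub 1 one_pos
  have hinf := infinite_of_pos_upperDensity hpos
  obtain ⟨n, hnA, hN⟩ := hinf.exists_gt N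
  refine ⟨n, hN, ?_⟩
  have h0 := hnA 0 rfl
  rw [sumFn_zero, sumFn_zero, tshift_iterate_zero] at h0
  have hb0 : b 0 = (C : ℂ) := by simp [hbdef]
  rw [hb0] at h0
  have htri : ‖(C : ℂ)‖ - ‖a n * ((((n : ℝ) + 1) ^ α : ℝ) : ℂ)‖ ≤ 1 := by
    have := norm_sub_norm_le (a n * ((((n : ℝ) + 1) ^ α : ℝ) : ℂ) - (C : ℂ)) (-(C : ℂ))
    have h2 : ‖(C : ℂ)‖ - ‖a n * ((((n : ℝ) + 1) ^ α : ℝ) : ℂ)‖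
        ≤ ‖a n * ((((n : ℝ) + 1) ^ α : ℝ) : ℂ) - (C : ℂ)‖ := by
      have := norm_sub_norm_le ((C : ℂ)) (a n * ((((n : ℝ) + 1) ^ α : ℝ) : ℂ))
      calc ‖(C : ℂ)‖ - ‖a n * ((((n : ℝ) + 1) ^ α : ℝ) : ℂ)‖
          ≤ ‖(C : ℂ) - a n * ((((n : ℝ) + 1) ^ α : ℝ) : ℂ)‖ := this
        _ = ‖a n * ((((n : ℝ) + 1) ^ α : ℝ) : ℂ) - (C : ℂ)‖ := norm_sub_rev _ _
    linarith [h2.trans h0.le]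
  have hCnorm : ‖(C : ℂ)‖ = |C| := by
    rw [Complex.norm_real]
    rfl
  have hmulnorm : ‖a n * ((((n : ℝ) + 1) ^ α : ℝ) : ℂ)‖ = ‖a n‖ * ((n : ℝ) + 1) ^ α := by
    rw [norm_mul, Complex.norm_real, Real.norm_eq_abs,
      _root_.abs_of_pos (Real.rpow_pos_of_pos (by positivity) α)]
  rw [hCnorm, hmulnorm] at htri
  have : C ≤ |C| := le_abs_self C
  linarith

lemma limsup_eq_top_of_frequently {F : Filter ℝ} [F.NeBot] {u : ℝ → EReal}
    (h : ∀ M : ℝ, ∃ᶠ r in F, (M : EReal) ≤ u r) : Filter.limsup u F = ⊤ := by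
  rw [Filter.limsup_eq]
  refine le_antisymm le_top (le_sInf fun bnd hbnd => ?_)
  rw [top_le_iff]
  by_contra hne
  have hlt : bnd < ⊤ := lt_top_iff_ne_top.2 hne
  obtain ⟨M, hM2, -⟩ := EReal.exists_between_coe_real hlt
  obtain ⟨r, hr1, hr2⟩ := ((h M).and_eventually hbnd).exists
  exact absurd (hr1.trans hr2) (not_le.2 hM2)

lemma frequently_near_one {P : ℝ → Prop}
    (h : ∀ δ : ℝ, 0 < δ → ∃ r : ℝ, r ∈ Set.Ioo (0:ℝ) 1 ∧ 1 - δ < r ∧ P r) :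
    ∃ᶠ r in nhdsWithin 1 (Set.Ioo 0 1), P r := by
  rw [Filter.frequently_iff]
  intro U hU
  obtain ⟨V, hVopen, hV1, hVsub⟩ := mem_nhdsWithin.1 hU
  obtain ⟨δ, hδ, hball⟩ := Metric.isOpen_iff.1 hVopen 1 hV1
  obtain ⟨r, hrIoo, hrδ, hrP⟩ := h δ hδ
  refine ⟨r, hVsub ⟨hball ?_, hrIoo⟩, hrP⟩
  rw [Metric.mem_ball, Real.dist_eq, abs_sub_lt_iff]
  constructor <;> [linarith [hrIoo.2]; linarith]

lemma pow_ratio_ge (n : ℕ) (hn : 1 ≤ n) : (1:ℝ)/4 ≤ ((n : ℝ) / ((n : ℝ) + 1)) ^ n := by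
  have hx : (1:ℝ) ≤ (n : ℝ) := by exact_mod_cast hn
  have hx0 : (0:ℝ) < (n : ℝ) := by linarith
  have h1 : ((n : ℝ) + 1) / (n : ℝ) = 1 + 1 / n := by field_simp
  have h2 : (((n : ℝ) + 1) / (n : ℝ)) ^ n ≤ 4 := by
    rw [h1]
    have hle : 1 + 1 / (n : ℝ) ≤ Real.exp (1 / n) := by
      have := Real.add_one_le_exp (1 / (n : ℝ))
      linarith
    calc (1 + 1 / (n : ℝ)) ^ n ≤ Real.exp (1 / n) ^ n :=
          pow_le_pow_left₀ (by positivity) hle n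
      _ = Real.exp ((n : ℝ) * (1 / n)) := (Real.exp_nat_mul _ n).symm
      _ = Real.exp 1 := by rw [mul_one_div, div_self (ne_of_gt hx0)]
      _ ≤ 4 := by linarith [Real.exp_one_lt_d9.le]
  have hpos : (0:ℝ) < (((n : ℝ) + 1) / (n : ℝ)) ^ n := by positivity
  have hinv : ((n : ℝ) / ((n : ℝ) + 1)) ^ n = ((((n : ℝ) + 1) / (n : ℝ)) ^ n)⁻¹ := by
    rw [← inv_pow, inv_div]
  rw [hinv]
  calc (1:ℝ)/4 = 4⁻¹ := by norm_num
    _ ≤ ((((n : ℝ) + 1) / (n : ℝ)) ^ n)⁻¹ := inv_anti₀ hpos h2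

end Main
/-- Theorem 3.4 (lower estimates, `p = 1`): growth of `𝒰`-frequently hypercyclic
functions for `T_α`. -/
theorem stmt8 (α : ℝ) (a : ℕ → ℂ) (ha : InHD a) (hfa : UFreqHC α a) :
    (α ≤ 0 → limsupR (fun r => (1 - r) ^ (-α) * Mp 1 a r) = ⊤) ∧
    (0 < α → 0 < limsupR (fun r => Mp 1 a r)) := by
  have hNeBot : (nhdsWithin (1:ℝ) (Set.Ioo 0 1)).NeBot := by
    refine mem_closure_iff_nhdsWithin_neBot.1 ?_
    rw [closure_Ioo (by norm_num : (0:ℝ) ≠ 1)]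
    exact ⟨by norm_num, le_refl 1⟩
  constructor
  · intro hα
    unfold limsupR
    refine limsup_eq_top_of_frequently fun M => ?_
    refine frequently_near_one fun δ hδ => ?_
    set C : ℝ := 4 * |M| + 5 with hC
    set N : ℕ := max 1 ⌈1/δ⌉₊ with hN
    obtain ⟨n, hnN, hcoef⟩ := exists_large_coeff α a hfa C N
    have hn1 : 1 ≤ n := le_trans (le_max_left 1 _) hnN.le
    have hnR : (1:ℝ) ≤ (n:ℝ) := by exact_mod_cast hn1
    set r : ℝ := 1 - 1/((n:ℝ)+1) with hr
    have htpos : (0:ℝ) < (n:ℝ)+1 := by positivity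
    have hfrac_pos : (0:ℝ) < 1/((n:ℝ)+1) := by positivity
    have hfrac_le : 1/((n:ℝ)+1) ≤ 1/2 :=
      one_div_le_one_div_of_le (by norm_num) (by linarith)
    have hr0 : 0 < r := by rw [hr]; linarith
    have hr1 : r < 1 := by rw [hr]; linarith
    have hclose : 1 - δ < r := by
      rw [hr]
      have hlt : 1/((n:ℝ)+1) < δ := by
        have h1 : (1:ℝ)/δ ≤ (⌈1/δ⌉₊ : ℝ) := Nat.le_ceil _
        have h2 : ((⌈1/δ⌉₊:ℕ):ℝ) ≤ (N:ℝ) := by exact_mod_cast le_max_right 1 ⌈1/δ⌉₊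
        have h3 : (N:ℝ) < (n:ℝ) := by exact_mod_cast hnN
        have h4 : (1:ℝ)/δ < (n:ℝ)+1 := by linarith
        calc 1/((n:ℝ)+1) < 1/(1/δ) := one_div_lt_one_div_of_lt (by positivity) h4
          _ = δ := one_div_one_div δ
      linarith
    refine ⟨r, ⟨hr0, hr1⟩, hclose, ?_⟩
    rw [EReal.coe_le_coe_iff]
    show M ≤ (1 - r) ^ (-α) * Mp 1 a r
    have hM1 := coeff_le_M1 a ha hr0 hr1 n
    have h1mr : 1 - r = 1/((n:ℝ)+1) := by rw [hr]; ring
    have hrw : (1 - r) ^ (-α) = ((n:ℝ)+1) ^ α := by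
      rw [h1mr, one_div, Real.rpow_neg (inv_nonneg.2 htpos.le), Real.inv_rpow htpos.le, inv_inv]
    have hrpow : (0:ℝ) < ((n:ℝ)+1) ^ α := Real.rpow_pos_of_pos htpos α
    have hrn : (1:ℝ)/4 ≤ r ^ n := by
      have hre : r = (n:ℝ)/((n:ℝ)+1) := by rw [hr]; field_simp; ring
      rw [hre]
      exact pow_ratio_ge n hn1
    have hstep1 : ((n:ℝ)+1)^α * (‖a n‖ * r^n) ≤ (1-r)^(-α) * Mp 1 a r := by
      rw [hrw]
      exact mul_le_mul_of_nonneg_left hM1 hrpow.le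
    have hstep2 : (C - 1) * r^n ≤ ((n:ℝ)+1)^α * (‖a n‖ * r^n) := by
      calc (C - 1)*r^n ≤ (‖a n‖ * ((n:ℝ)+1)^α) * r^n :=
            mul_le_mul_of_nonneg_right hcoef (by positivity)
        _ = ((n:ℝ)+1)^α * (‖a n‖ * r^n) := by ring
    have hC1 : (0:ℝ) ≤ C - 1 := by rw [hC]; linarith [abs_nonneg M]
    have hstep3 : (C - 1) * (1/4) ≤ (C - 1) * r^n :=
      mul_le_mul_of_nonneg_left hrn hC1
    have habs := le_abs_self M
    have hM4 : M ≤ (C - 1) * (1/4) := by rw [hC]; linarith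
    exact hM4.trans (hstep3.trans (hstep2.trans hstep1))
  · intro _
    obtain ⟨n, _, hcoef⟩ := exists_large_coeff α a hfa 2 0
    have htpos : (0:ℝ) < (n:ℝ)+1 := by positivity
    have hapos : 0 < ‖a n‖ := by
      by_contra hc
      push_neg at hc
      have hz : ‖a n‖ = 0 := le_antisymm hc (norm_nonneg _)
      rw [hz, zero_mul] at hcoef
      norm_num at hcoef
    unfold limsupR
    have hev : ∀ᶠ r in nhdsWithin (1:ℝ) (Set.Ioo 0 1),
        ((‖a n‖ * r ^ n : ℝ) : EReal) ≤ ((Mp 1 a r : ℝ) : EReal) := by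
      filter_upwards [self_mem_nhdsWithin] with r hr
      exact EReal.coe_le_coe_iff.2 (coeff_le_M1 a ha hr.1 hr.2 n)
    have hlims : Filter.limsup (fun r : ℝ => ((‖a n‖ * r ^ n : ℝ) : EReal))
        (nhdsWithin 1 (Set.Ioo 0 1)) = ((‖a n‖ : ℝ) : EReal) := by
      apply Filter.Tendsto.limsup_eq
      refine EReal.tendsto_coe.2 ?_
      have hcont : Continuous (fun r : ℝ => ‖a n‖ * r ^ n) := by continuity
      have h1 := hcont.tendsto 1
      simp only [one_pow, mul_one] at h1
      exact h1.mono_left nhdsWithin_le_nhds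
    calc (0:EReal) < ((‖a n‖ : ℝ) : EReal) := by exact_mod_cast hapos
      _ = _ := hlims.symm
      _ ≤ _ := Filter.limsup_le_limsup hev
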